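/- Let Γ be a simple graph. Then Γ is isomorphic, as a simple graph, to the graph product ∗_{c, CΓ} K_c taken over the core CΓ of Γ, where for each core equivalence class c the graph K_c is the complete graph on the vertices belonging to c. Concretely, the map sending a vertex v of Γ to the pair (v̄, v), where v̄ is the core equivalence class of v, is a graph isomorphism from Γ onto this graph product. -/

import Mathlib

/-- The *star* of a vertex `v` in a simple graph `G`: `{v} ∪ Link(v)`. -/
def starSet {V : Type*} (G : SimpleGraph V) (v : V) : Set V :=
  insert v (G.neighborSet v)

/-- The *core equivalence* on the vertices of a simple graph: `v ≈ w` iff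
`Star(v) = Star(w)`. -/
def coreSetoid {V : Type*} (G : SimpleGraph V) : Setoid V where
  r v w := starSet G v = starSet G w
  iseqv := ⟨fun _ => rfl, Eq.symm, Eq.trans⟩

/-- The *core* of a simple graph `G`: the simple graph whose vertices are the core
equivalence classes of `G`, with two distinct classes adjacent iff some (equivalently,
any) representatives are adjacent in `G`. -/
def coreGraph {V : Type*} (G : SimpleGraph V) :
    SimpleGraph (Quotient (coreSetoid G)) where
  Adj c d := c ≠ d ∧ ∃ v w : V,
    Quotient.mk (coreSetoid G) v = c ∧ Quotient.mk (coreSetoid G) w = d ∧ G.Adj v w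
  symm := by
    constructor
    rintro c d ⟨hne, v, w, hv, hw, h⟩
    exact ⟨hne.symm, w, v, hw, hv, h.symm⟩
  loopless := ⟨fun c h => h.1 rfl⟩

/-- The graph product `∗_{v,Γ} Λ_v` of a family of simple graphs `Λ v` over a simple
graph `Γ`: vertices are pairs `⟨v, s⟩` with `v ∈ Γ` and `s ∈ Λ v`, and distinct
vertices `⟨v, s⟩`, `⟨w, t⟩` are adjacent iff either `v = w` and `s, t` are adjacent in
`Λ v`, or `v ≠ w` and `v, w` are adjacent in `Γ`. -/
def graphProduct {V : Type*} (Γ : SimpleGraph V) (W : V → Type*)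
    (Λ : ∀ v : V, SimpleGraph (W v)) : SimpleGraph (Σ v : V, W v) where
  Adj p q := (∃ (v : V) (s t : W v), p = ⟨v, s⟩ ∧ q = ⟨v, t⟩ ∧ (Λ v).Adj s t) ∨
    (p.1 ≠ q.1 ∧ Γ.Adj p.1 q.1)
  symm := by
    constructor
    rintro p q (⟨v, s, t, rfl, rfl, h⟩ | ⟨hne, h⟩)
    · exact Or.inl ⟨v, t, s, rfl, rfl, h.symm⟩
    · exact Or.inr ⟨hne.symm, h.symm⟩
  loopless := by
    constructor
    rintro p (⟨v, s, t, rfl, hq, h⟩ | ⟨hne, _⟩)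
    · obtain rfl : s = t := by simpa using hq
      exact (Λ v).irrefl h
    · exact hne rfl

/-- **Every graph is the graph product of complete graphs over its core.**
The map sending a vertex `v` of `Γ` to the pair `(v̄, v)`, where `v̄` is the core
equivalence class of `v`, is a graph isomorphism from `Γ` onto the graph product
`∗_{c, CΓ} K_c`, where `K_c` is the complete graph on the vertices belonging to the
core equivalence class `c`: the map is a bijection which preserves and reflects
adjacency. -/
lemma adj_of_star_eq {V : Type*} (Γ : SimpleGraph V) {v w : V}
    (h : starSet Γ v = starSet Γ w) (hne : v ≠ w) : Γ.Adj v w := by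
  have hv : v ∈ starSet Γ v := Set.mem_insert _ _
  rw [h] at hv
  rcases hv with h' | h'
  · exact absurd h' hne
  · exact (Γ.adj_symm h')

theorem coreGraph_decomposition {V : Type*} (Γ : SimpleGraph V) :
    Function.Bijective (fun v : V =>
      (⟨Quotient.mk (coreSetoid Γ) v, ⟨v, rfl⟩⟩ :
        Σ c : Quotient (coreSetoid Γ), {u : V // Quotient.mk (coreSetoid Γ) u = c})) ∧
    ∀ v w : V, Γ.Adj v w ↔
      (graphProduct (coreGraph Γ)
        (fun c => {u : V // Quotient.mk (coreSetoid Γ) u = c})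
        (fun _ => ⊤)).Adj
        ⟨Quotient.mk (coreSetoid Γ) v, ⟨v, rfl⟩⟩
        ⟨Quotient.mk (coreSetoid Γ) w, ⟨w, rfl⟩⟩ := by
  constructor
  · constructor
    · intro a b hab
      have := congrArg (fun p : (Σ c : Quotient (coreSetoid Γ),
        {u : V // Quotient.mk (coreSetoid Γ) u = c}) => p.2.val) hab
      simpa using this
    · rintro ⟨c, u, hu⟩
      subst hu
      exact ⟨u, rfl⟩
  · intro v w
    constructor
    · intro h
      by_cases hq : Quotient.mk (coreSetoid Γ) v = Quotient.mk (coreSetoid Γ) w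
      · refine Or.inl ⟨Quotient.mk (coreSetoid Γ) v, ⟨v, rfl⟩, ⟨w, hq.symm⟩, rfl, ?_, ?_⟩
        · have key : ∀ (c d : Quotient (coreSetoid Γ)) (hcd : c = d) (u : V)
              (hu : Quotient.mk (coreSetoid Γ) u = c),
              (⟨c, ⟨u, hu⟩⟩ : Σ c : Quotient (coreSetoid Γ),
                {u : V // Quotient.mk (coreSetoid Γ) u = c}) = ⟨d, ⟨u, hu.trans hcd⟩⟩ := by
            rintro c d rfl u hu; rfl
          exact key _ _ hq.symm w rfl
        · simp only [SimpleGraph.top_adj, ne_eq, Subtype.mk.injEq]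
          exact Γ.ne_of_adj h
      · exact Or.inr ⟨hq, hq, v, w, rfl, rfl, h⟩
    · rintro (⟨c, s, t, hp, hq, hst⟩ | ⟨hne, _, v', w', hv', hw', h⟩)
      · have hsv : v = s.val := congrArg
          (fun p : (Σ c : Quotient (coreSetoid Γ),
            {u : V // Quotient.mk (coreSetoid Γ) u = c}) => p.2.val) hp
        have htw : w = t.val := congrArg
          (fun p : (Σ c : Quotient (coreSetoid Γ),
            {u : V // Quotient.mk (coreSetoid Γ) u = c}) => p.2.val) hq
        simp only [SimpleGraph.top_adj] at hst
        have hvw : v ≠ w := by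
          intro e
          exact hst (Subtype.ext (by rw [← hsv, ← htw, e]))
        have h1 : Quotient.mk (coreSetoid Γ) v = Quotient.mk (coreSetoid Γ) w := by
          rw [hsv, htw, s.prop, t.prop]
        exact adj_of_star_eq Γ (Quotient.exact h1) hvw
      · have hvv' : starSet Γ v' = starSet Γ v := Quotient.exact hv'
        have hww' : starSet Γ w' = starSet Γ w := Quotient.exact hw'
        have hw'v : Γ.Adj v w' := by
          have : w' ∈ starSet Γ v' := Set.mem_insert_of_mem _ h
          rw [hvv'] at this
          rcases this with h' | h'
          · exfalso; apply hne; rw [← hw', h']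
          · exact h'
        have : v ∈ starSet Γ w := by
          rw [← hww']
          exact Set.mem_insert_of_mem _ hw'v.symm
        rcases this with h' | h'
        · exfalso; apply hne; rw [h']
        · exact h'.symm
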